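/- For every nonnegative integer n, the sum over all pairs of nonnegative integers (i, j) with i + j = n of B_{2i} · B_{2j}, minus the sum over all pairs of nonnegative integers (i, j) with i + j = n and j ≥ 1 of B_{2i+1} · B_{2j−1}, equals the sum over all pairs of nonnegative integers (i, j) with i + j = n of C_{2i} · B_{2j}. -/

import Mathlib

open Finset

private def B (k : ℕ) : ℤ := Nat.centralBinom k
private def Ct (k : ℕ) : ℤ := catalan k

private lemma hR1 (k : ℕ) : ((k : ℤ) + 1) * B (k + 1) = (4 * k + 2) * B k := by
  have h := congrArg (Nat.cast : ℕ → ℤ) (Nat.succ_mul_centralBinom_succ k)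
  push_cast at h
  unfold B; push_cast; linarith

private lemma hR3 (k : ℕ) : ((k : ℤ) + 1) * Ct k = B k := by
  have h := congrArg (Nat.cast : ℕ → ℤ) (succ_mul_catalan_eq_centralBinom k)
  push_cast at h
  unfold B Ct; push_cast; linarith

/-- split of a sum over `range (2n+1)` into even and odd indices. -/
private lemma sum_split_odd (f : ℕ → ℤ) (n : ℕ) :
    ∑ k ∈ range (2 * n + 1), f k
      = (∑ i ∈ range (n + 1), f (2 * i)) + ∑ i ∈ range n, f (2 * i + 1) := by
  induction n with
  | zero => simp
  | succ n ih =>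
      have h1 : 2 * (n + 1) + 1 = (2 * n + 1) + 1 + 1 := by ring
      rw [h1, sum_range_succ, sum_range_succ, ih]
      have e1 : 2 * n + 1 + 1 = 2 * (n + 1) := by ring
      rw [e1, sum_range_succ (fun i => f (2 * i)) (n + 1),
        sum_range_succ (fun i => f (2 * i + 1)) n]
      ring

/-- split of a sum over `range (2n+2)` into even and odd indices. -/
private lemma sum_split_even (f : ℕ → ℤ) (n : ℕ) :
    ∑ k ∈ range (2 * n + 2), f k
      = (∑ i ∈ range (n + 1), f (2 * i)) + ∑ i ∈ range (n + 1), f (2 * i + 1) := by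
  have h1 : 2 * n + 2 = (2 * n + 1) + 1 := by ring
  rw [h1, sum_range_succ, sum_split_odd, sum_range_succ (fun i => f (2 * i + 1)) n]
  ring

private def Asum (m : ℕ) : ℤ := ∑ k ∈ range (m + 1), B k * B (m - k)
private def Vsum (m : ℕ) : ℤ := ∑ k ∈ range (m + 1), (k : ℤ) * B k * B (m - k)

private lemma two_V (m : ℕ) : 2 * Vsum m = (m : ℤ) * Asum m := by
  have hrefl : Vsum m = ∑ k ∈ range (m + 1), ((m : ℤ) - k) * B k * B (m - k) := by
    unfold Vsum
    rw [← Finset.sum_range_reflect (fun k => (k : ℤ) * B k * B (m - k)) (m + 1)]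
    refine Finset.sum_congr rfl fun k hk => ?_
    have hk' : k ≤ m := by simpa [Nat.lt_succ_iff] using hk
    have h1 : m + 1 - 1 - k = m - k := by omega
    have h2 : m - (m - k) = k := by omega
    rw [h1, h2]
    have h3 : ((m - k : ℕ) : ℤ) = (m : ℤ) - k := by omega
    rw [h3]; ring
  unfold Asum
  rw [Finset.mul_sum, two_mul]
  nth_rewrite 2 [hrefl]
  unfold Vsum
  rw [← Finset.sum_add_distrib]
  refine Finset.sum_congr rfl fun k hk => ?_
  ring

private lemma V_succ (m : ℕ) : Vsum (m + 1) = 4 * Vsum m + 2 * Asum m := by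
  unfold Vsum Asum
  rw [Finset.sum_range_succ' (fun k => (k : ℤ) * B k * B (m + 1 - k)) (m + 1)]
  simp only [Nat.cast_zero, zero_mul, add_zero]
  rw [Finset.mul_sum, Finset.mul_sum, ← Finset.sum_add_distrib]
  refine Finset.sum_congr rfl fun k hk => ?_
  have h1 : m + 1 - (k + 1) = m - k := by
    omega
  rw [h1]
  have h := hR1 k
  push_cast
  linear_combination (B (m - k)) * h

private lemma A_pow (m : ℕ) : Asum m = 4 ^ m := by
  induction m with
  | zero => simp [Asum, B, Nat.centralBinom]
  | succ m ih =>
      have h1 : 2 * Vsum (m + 1) = ((m : ℤ) + 1) * Asum (m + 1) := by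
        have h := two_V (m + 1); push_cast at h ⊢; linarith
      have h2 : 2 * Vsum m = (m : ℤ) * Asum m := two_V m
      have h3 := V_succ m
      have h4 : ((m : ℤ) + 1) * Asum (m + 1) = ((m : ℤ) + 1) * (4 ^ (m + 1)) := by
        rw [ih] at h2
        linear_combination -h1 + 2 * h3 + 4 * h2 + 4 * ih
      exact mul_left_cancel₀ (by positivity) h4

private def Tsum (m : ℕ) : ℤ := ∑ k ∈ range (m + 1), (-1) ^ k * B k * B (m - k)
private def Wsum (m : ℕ) : ℤ := ∑ k ∈ range (m + 1), (-1) ^ k * (k : ℤ) * B k * B (m - k)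

private lemma neg_one_pow_sub {m k : ℕ} (h : k ≤ m) :
    ((-1 : ℤ)) ^ (m - k) = (-1) ^ m * (-1) ^ k := by
  have h1 : (-1 : ℤ) ^ (m - k) * (-1) ^ k = (-1) ^ m := by
    rw [← pow_add]; congr 1; omega
  have hk : ((-1 : ℤ) ^ k) * ((-1 : ℤ) ^ k) = 1 := by
    rw [← pow_add, ← two_mul, pow_mul]; norm_num
  linear_combination ((-1 : ℤ) ^ k) * h1 - ((-1 : ℤ) ^ (m - k)) * hk

private lemma T_reflect (m : ℕ) : Tsum m = (-1) ^ m * Tsum m := by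
  nth_rewrite 1 [Tsum]
  rw [← Finset.sum_range_reflect (fun k => (-1 : ℤ) ^ k * B k * B (m - k)) (m + 1)]
  unfold Tsum
  rw [Finset.mul_sum]
  refine Finset.sum_congr rfl fun k hk => ?_
  have hk' : k ≤ m := by simpa [Nat.lt_succ_iff] using hk
  have h1 : m + 1 - 1 - k = m - k := by omega
  have h2 : m - (m - k) = k := by omega
  rw [h1, h2, neg_one_pow_sub hk']
  ring

private lemma W_reflect (m : ℕ) :
    Wsum m = (-1) ^ m * ((m : ℤ) * Tsum m - Wsum m) := by
  have hs : (m : ℤ) * Tsum m - Wsum m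
      = ∑ k ∈ range (m + 1), ((m : ℤ) - k) * ((-1) ^ k * B k * B (m - k)) := by
    unfold Tsum Wsum
    rw [Finset.mul_sum, ← Finset.sum_sub_distrib]
    refine Finset.sum_congr rfl fun k hk => ?_
    ring
  rw [hs, Finset.mul_sum]
  nth_rewrite 1 [Wsum]
  rw [← Finset.sum_range_reflect (fun k => (-1 : ℤ) ^ k * (k : ℤ) * B k * B (m - k)) (m + 1)]
  refine Finset.sum_congr rfl fun k hk => ?_
  have hk' : k ≤ m := by simpa [Nat.lt_succ_iff] using hk
  have h1 : m + 1 - 1 - k = m - k := by omega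
  have h2 : m - (m - k) = k := by omega
  rw [h1, h2, neg_one_pow_sub hk']
  have h3 : ((m - k : ℕ) : ℤ) = (m : ℤ) - k := by omega
  rw [h3]; ring

private lemma T_odd (n : ℕ) : Tsum (2 * n + 1) = 0 := by
  have h := T_reflect (2 * n + 1)
  have h1 : (-1 : ℤ) ^ (2 * n + 1) = -1 := by
    rw [pow_succ, pow_mul]; norm_num
  rw [h1] at h; linarith

private lemma W_succ (m : ℕ) : Wsum (m + 1) = -4 * Wsum m - 2 * Tsum m := by
  have hR : -4 * Wsum m - 2 * Tsum m
      = ∑ k ∈ range (m + 1), (-(4 * (k : ℤ) + 2)) * ((-1) ^ k * B k * B (m - k)) := by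
    unfold Wsum Tsum
    rw [Finset.mul_sum, Finset.mul_sum, ← Finset.sum_sub_distrib]
    · refine Finset.sum_congr rfl fun k hk => ?_
      ring
  rw [hR]
  unfold Wsum
  rw [Finset.sum_range_succ' (fun k => (-1 : ℤ) ^ k * (k : ℤ) * B k * B (m + 1 - k)) (m + 1)]
  simp only [Nat.cast_zero, mul_zero, zero_mul, add_zero]
  refine Finset.sum_congr rfl fun k hk => ?_
  have h1 : m + 1 - (k + 1) = m - k := by omega
  rw [h1]
  have hp : (-1 : ℤ) ^ (k + 1) = -(-1) ^ k := by rw [pow_succ]; ring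
  rw [hp]
  have h := hR1 k
  push_cast
  linear_combination (-(-1 : ℤ) ^ k * B (m - k)) * h

private lemma T_even (n : ℕ) : Tsum (2 * n) = 4 ^ n * B n := by
  induction n with
  | zero => simp [Tsum, B, Nat.centralBinom]
  | succ n ih =>
      have e1 : 2 * (n + 1) = (2 * n + 1) + 1 := by ring
      have hW2 : 2 * Wsum (2 * n) = (2 * (n : ℤ)) * Tsum (2 * n) := by
        have h := W_reflect (2 * n)
        have h1 : (-1 : ℤ) ^ (2 * n) = 1 := by rw [pow_mul]; norm_num
        rw [h1] at h; push_cast at h ⊢; linarith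
      have hW2' : 2 * Wsum (2 * (n + 1)) = (2 * ((n : ℤ) + 1)) * Tsum (2 * (n + 1)) := by
        have h := W_reflect (2 * (n + 1))
        have h1 : (-1 : ℤ) ^ (2 * (n + 1)) = 1 := by rw [pow_mul]; norm_num
        rw [h1] at h; push_cast at h ⊢; linarith
      have hTo := T_odd n
      have hs1 : Wsum (2 * n + 1) = -4 * Wsum (2 * n) - 2 * Tsum (2 * n) := W_succ (2 * n)
      have hs2 : Wsum (2 * (n + 1)) = -4 * Wsum (2 * n + 1) - 2 * Tsum (2 * n + 1) := by
        rw [e1]; exact W_succ (2 * n + 1)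
      have hB := hR1 n
      have e2 : Wsum (2 * (n + 1)) = 16 * Wsum (2 * n) + 8 * Tsum (2 * n) := by
        rw [hs2, hs1, hTo]; ring
      have l1 : (2 * ((n : ℤ) + 1)) * Tsum (2 * (n + 1))
          = (32 * n + 16) * Tsum (2 * n) := by
        linear_combination -hW2' + 2 * e2 + 16 * hW2
      have key : (2 * ((n : ℤ) + 1)) * Tsum (2 * (n + 1))
          = (2 * ((n : ℤ) + 1)) * (4 ^ (n + 1) * B (n + 1)) := by
        linear_combination l1 + (32 * (n : ℤ) + 16) * ih - (8 * (4 : ℤ) ^ n) * hB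
      exact mul_left_cancel₀ (by positivity) key

-- parity-split sequences
private def asum (n : ℕ) : ℤ := ∑ i ∈ range (n + 1), B (2 * i) * B (2 * (n - i))
private def bsum (n : ℕ) : ℤ := ∑ i ∈ range n, B (2 * i + 1) * B (2 * (n - 1 - i) + 1)
private def msum (n : ℕ) : ℤ := ∑ i ∈ range (n + 1), B (2 * i) * B (2 * (n - i) + 1)
private def csum (n : ℕ) : ℤ := ∑ i ∈ range (n + 1), Ct (2 * i) * B (2 * (n - i))
private def dsum (n : ℕ) : ℤ := ∑ i ∈ range (n + 1), Ct (2 * i) * B (2 * (n - i) + 1)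

private lemma a_sub_b (n : ℕ) : asum n - bsum n = Tsum (2 * n) := by
  unfold Tsum
  rw [sum_split_odd (fun k => (-1 : ℤ) ^ k * B k * B (2 * n - k)) n]
  unfold asum bsum
  have he : ∀ i ∈ range (n + 1),
      (-1 : ℤ) ^ (2 * i) * B (2 * i) * B (2 * n - 2 * i) = B (2 * i) * B (2 * (n - i)) := by
    intro i hi
    have hi' : i ≤ n := by simpa [Nat.lt_succ_iff] using hi
    have h1 : 2 * n - 2 * i = 2 * (n - i) := by omega
    have h2 : (-1 : ℤ) ^ (2 * i) = 1 := by rw [pow_mul]; norm_num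
    rw [h1, h2]; ring
  have ho : ∀ i ∈ range n,
      (-1 : ℤ) ^ (2 * i + 1) * B (2 * i + 1) * B (2 * n - (2 * i + 1))
        = -(B (2 * i + 1) * B (2 * (n - 1 - i) + 1)) := by
    intro i hi
    have hi' : i < n := by simpa using hi
    have h1 : 2 * n - (2 * i + 1) = 2 * (n - 1 - i) + 1 := by omega
    have h2 : (-1 : ℤ) ^ (2 * i + 1) = -1 := by rw [pow_succ, pow_mul]; norm_num
    rw [h1, h2]; ring
  rw [Finset.sum_congr rfl he, Finset.sum_congr rfl ho, Finset.sum_neg_distrib]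
  ring

private lemma a_add_b (n : ℕ) : asum n + bsum n = 16 ^ n := by
  have hA : Asum (2 * n) = 4 ^ (2 * n) := A_pow (2 * n)
  unfold Asum at hA
  rw [sum_split_odd (fun k => B k * B (2 * n - k)) n] at hA
  unfold asum bsum
  have he : ∀ i ∈ range (n + 1),
      B (2 * i) * B (2 * n - 2 * i) = B (2 * i) * B (2 * (n - i)) := by
    intro i hi
    have hi' : i ≤ n := by simpa [Nat.lt_succ_iff] using hi
    have h1 : 2 * n - 2 * i = 2 * (n - i) := by omega
    rw [h1]
  have ho : ∀ i ∈ range n,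
      B (2 * i + 1) * B (2 * n - (2 * i + 1)) = B (2 * i + 1) * B (2 * (n - 1 - i) + 1) := by
    intro i hi
    have hi' : i < n := by simpa using hi
    have h1 : 2 * n - (2 * i + 1) = 2 * (n - 1 - i) + 1 := by omega
    rw [h1]
  rw [Finset.sum_congr rfl he, Finset.sum_congr rfl ho] at hA
  rw [hA, pow_mul]; norm_num

private lemma two_a (n : ℕ) : 2 * asum n = 16 ^ n + 4 ^ n * B n := by
  have h1 := a_sub_b n
  have h2 := a_add_b n
  have h3 := T_even n
  linarith

private lemma two_m (n : ℕ) : 2 * msum n = 4 * 16 ^ n := by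
  have hA : Asum (2 * n + 1) = 4 ^ (2 * n + 1) := A_pow (2 * n + 1)
  unfold Asum at hA
  have hrange : 2 * n + 1 + 1 = 2 * n + 2 := rfl
  rw [hrange, sum_split_even (fun k => B k * B (2 * n + 1 - k)) n] at hA
  have he : ∀ i ∈ range (n + 1),
      B (2 * i) * B (2 * n + 1 - 2 * i) = B (2 * i) * B (2 * (n - i) + 1) := by
    intro i hi
    have hi' : i ≤ n := by simpa [Nat.lt_succ_iff] using hi
    have h1 : 2 * n + 1 - 2 * i = 2 * (n - i) + 1 := by omega
    rw [h1]
  have ho : ∀ i ∈ range (n + 1),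
      B (2 * i + 1) * B (2 * n + 1 - (2 * i + 1)) = B (2 * i + 1) * B (2 * (n - i)) := by
    intro i hi
    have hi' : i ≤ n := by simpa [Nat.lt_succ_iff] using hi
    have h1 : 2 * n + 1 - (2 * i + 1) = 2 * (n - i) := by omega
    rw [h1]
  rw [Finset.sum_congr rfl he, Finset.sum_congr rfl ho] at hA
  have hrefl : ∑ i ∈ range (n + 1), B (2 * i + 1) * B (2 * (n - i)) = msum n := by
    rw [← Finset.sum_range_reflect (fun i => B (2 * i + 1) * B (2 * (n - i))) (n + 1)]
    unfold msum
    refine Finset.sum_congr rfl fun i hi => ?_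
    have hi' : i ≤ n := by simpa [Nat.lt_succ_iff] using hi
    have h1 : n + 1 - 1 - i = n - i := by omega
    have h2 : n - (n - i) = i := by omega
    rw [h1, h2]; ring
  rw [hrefl] at hA
  unfold msum at hA ⊢
  rw [pow_succ, pow_mul] at hA
  norm_num at hA
  linarith

-- weighted sums for the catalan convolution
private def C1 (n : ℕ) : ℤ := ∑ i ∈ range (n + 1), (i : ℤ) * (Ct (2 * i) * B (2 * (n - i)))
private def D2 (n : ℕ) : ℤ :=
  ∑ i ∈ range (n + 1), ((n - i : ℕ) : ℤ) * (Ct (2 * i) * B (2 * (n - i)))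
private def Psum (n : ℕ) : ℤ :=
  ∑ i ∈ range (n + 1), (i : ℤ) * (Ct (2 * i) * B (2 * (n - i) + 1))
private def Qsum (n : ℕ) : ℤ :=
  ∑ i ∈ range (n + 1), ((n - i : ℕ) : ℤ) * (Ct (2 * i) * B (2 * (n - i) + 1))

private lemma w1 (n : ℕ) : C1 n + D2 n = (n : ℤ) * csum n := by
  unfold C1 D2 csum
  rw [← Finset.sum_add_distrib, Finset.mul_sum]
  refine Finset.sum_congr rfl fun i hi => ?_
  have hi' : i ≤ n := by simpa [Nat.lt_succ_iff] using hi
  have h1 : ((n - i : ℕ) : ℤ) = (n : ℤ) - i := by omega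
  rw [h1]; ring

private lemma w2 (n : ℕ) : Psum n + Qsum n = (n : ℤ) * dsum n := by
  unfold Psum Qsum dsum
  rw [← Finset.sum_add_distrib, Finset.mul_sum]
  refine Finset.sum_congr rfl fun i hi => ?_
  have hi' : i ≤ n := by simpa [Nat.lt_succ_iff] using hi
  have h1 : ((n - i : ℕ) : ℤ) = (n : ℤ) - i := by omega
  rw [h1]; ring

private lemma r1 (n : ℕ) : 2 * C1 n + csum n = asum n := by
  unfold C1 csum asum
  rw [Finset.mul_sum, ← Finset.sum_add_distrib]
  refine Finset.sum_congr rfl fun i hi => ?_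
  have h := hR3 (2 * i)
  push_cast at h
  linear_combination (B (2 * (n - i))) * h

private lemma r2 (n : ℕ) : 2 * Psum n + dsum n = msum n := by
  unfold Psum dsum msum
  rw [Finset.mul_sum, ← Finset.sum_add_distrib]
  refine Finset.sum_congr rfl fun i hi => ?_
  have h := hR3 (2 * i)
  push_cast at h
  linear_combination (B (2 * (n - i) + 1)) * h

private lemma r3 (n : ℕ) : 2 * Qsum n + dsum n = 8 * D2 n + 2 * csum n := by
  unfold Qsum dsum D2 csum
  rw [Finset.mul_sum, ← Finset.sum_add_distrib, Finset.mul_sum, Finset.mul_sum,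
    ← Finset.sum_add_distrib]
  refine Finset.sum_congr rfl fun i hi => ?_
  have h := hR1 (2 * (n - i))
  push_cast at h
  linear_combination (Ct (2 * i)) * h

private lemma r4 (n : ℕ) : 2 * D2 (n + 1) = 8 * Qsum n + 6 * dsum n := by
  unfold D2 Qsum dsum
  rw [Finset.sum_range_succ]
  simp only [Nat.sub_self, Nat.cast_zero, zero_mul, add_zero]
  rw [Finset.mul_sum, Finset.mul_sum, Finset.mul_sum, ← Finset.sum_add_distrib]
  refine Finset.sum_congr rfl fun i hi => ?_
  have hi' : i ≤ n := by simpa [Nat.lt_succ_iff] using hi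
  have h1 : n + 1 - i = (n - i) + 1 := by omega
  rw [h1]
  have h2 : 2 * ((n - i) + 1) = (2 * (n - i) + 1) + 1 := by ring
  rw [h2]
  have h' := hR1 (2 * (n - i) + 1)
  push_cast at h' ⊢
  linear_combination (Ct (2 * i)) * h'

private lemma eq_d (n : ℕ) :
    (2 * (n : ℤ) + 2) * dsum n = (8 * n + 6) * csum n + msum n - 4 * asum n := by
  have h1 := w1 n; have h2 := w2 n; have h3 := r1 n; have h4 := r2 n; have h5 := r3 n
  linear_combination 8 * h1 - 2 * h2 - 4 * h3 + h4 + h5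

private lemma eq_c (n : ℕ) :
    (2 * (n : ℤ) + 3) * csum (n + 1)
      = asum (n + 1) + (8 * n + 10) * dsum n - 4 * msum n := by
  have h1 := w1 (n + 1); have h2 := w2 n; have h3 := r1 (n + 1); have h4 := r2 n
  have h5 := r4 n
  push_cast at h1
  linear_combination -2 * h1 + 8 * h2 + h3 - 4 * h4 + h5

private lemma c_closed (n : ℕ) : csum n = 4 ^ n * B n := by
  induction n with
  | zero => simp [csum, Ct, B, Nat.centralBinom]
  | succ n ih =>
      have hBn := hR1 n
      have hd : dsum n = 4 ^ n * B (n + 1) := by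
        have h := eq_d n
        have ha := two_a n
        have hm := two_m n
        rw [ih] at h
        have key : (4 * (n : ℤ) + 4) * dsum n = (4 * (n : ℤ) + 4) * (4 ^ n * B (n + 1)) := by
          linear_combination 2 * h + hm - 4 * ha - (4 * (4 : ℤ) ^ n) * hBn
        exact mul_left_cancel₀ (by positivity) key
      have h := eq_c n
      have ha := two_a (n + 1)
      have hm := two_m n
      rw [hd] at h
      have key : (4 * (n : ℤ) + 6) * csum (n + 1)
          = (4 * (n : ℤ) + 6) * (4 ^ (n + 1) * B (n + 1)) := by
        push_cast at ha
        linear_combination 2 * h + ha - 4 * hm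
      exact mul_left_cancel₀ (by positivity) key

/-- For every nonnegative integer `n`,
`∑_{i+j=n} B_{2i} B_{2j} − ∑_{i+j=n, j≥1} B_{2i+1} B_{2j−1} = ∑_{i+j=n} C_{2i} B_{2j}`. -/
theorem alternating_convolution_eq_catalan_convolution (n : ℕ) :
    (∑ ij ∈ Finset.HasAntidiagonal.antidiagonal n,
        (Nat.centralBinom (2 * ij.1) * Nat.centralBinom (2 * ij.2) : ℤ)) -
      ∑ ij ∈ (Finset.HasAntidiagonal.antidiagonal n).filter (fun ij => 1 ≤ ij.2),
        (Nat.centralBinom (2 * ij.1 + 1) * Nat.centralBinom (2 * ij.2 - 1) : ℤ) =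
      ∑ ij ∈ Finset.HasAntidiagonal.antidiagonal n,
        (catalan (2 * ij.1) * Nat.centralBinom (2 * ij.2) : ℤ) := by
  have hsum1 : (∑ ij ∈ Finset.HasAntidiagonal.antidiagonal n,
      (Nat.centralBinom (2 * ij.1) * Nat.centralBinom (2 * ij.2) : ℤ)) = asum n := by
    rw [Finset.Nat.sum_antidiagonal_eq_sum_range_succ_mk]
    rfl
  have hsum3 : (∑ ij ∈ Finset.HasAntidiagonal.antidiagonal n,
      (catalan (2 * ij.1) * Nat.centralBinom (2 * ij.2) : ℤ)) = csum n := by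
    rw [Finset.Nat.sum_antidiagonal_eq_sum_range_succ_mk]
    rfl
  have hsum2 : (∑ ij ∈ (Finset.HasAntidiagonal.antidiagonal n).filter (fun ij => 1 ≤ ij.2),
      (Nat.centralBinom (2 * ij.1 + 1) * Nat.centralBinom (2 * ij.2 - 1) : ℤ)) = bsum n := by
    rw [Finset.sum_filter, Finset.Nat.sum_antidiagonal_eq_sum_range_succ_mk,
      Finset.sum_range_succ]
    simp only [Nat.sub_self]
    norm_num
    unfold bsum
    refine Finset.sum_congr rfl fun k hk => ?_
    have hk' : k < n := by simpa using hk
    rw [if_pos (by omega)]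
    have h1 : 2 * (n - k) - 1 = 2 * (n - 1 - k) + 1 := by omega
    rw [h1]
    rfl
  rw [hsum1, hsum2, hsum3, c_closed, ← T_even, ← a_sub_b]
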